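/- arXiv:2205.00527 — 2 statements merged into one kernel-verified Lean document; each statement's English description precedes it below -/
import Mathlib

section
/- For all nonnegative integers N and j with j ≤ N, the following identity holds in ℤ[q]: ∑_{π ∈ D_{≤N}, γ(π) = j} q^{E(π)} = [N choose j]_q, where the sum runs over the (finitely many) partitions into distinct parts all ≤ N whose alternating sum of parts equals j. Equivalently, the number of partitions π into distinct parts ≤ N with γ(π) = j and E(π) = n equals the number of partitions of n into at most j parts each of size at most N − j. -/
/-- Sum of `f` over the entries of a list at even 0-based positions, i.e. over the
odd-indexed parts `λ1, λ3, λ5, …` of a partition `(λ1, λ2, λ3, …)`. -/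
def sumAlt (f : ℕ → ℕ) : List ℕ → ℕ
  | [] => 0
  | [a] => f a
  | a :: _ :: l => f a + sumAlt f l

/-- `O(π) = λ1 + λ3 + λ5 + ⋯`, the sum of the odd-indexed parts. -/
def Osum (l : List ℕ) : ℕ := sumAlt id l

/-- `E(π) = λ2 + λ4 + λ6 + ⋯`, the sum of the even-indexed parts. -/
def Esum (l : List ℕ) : ℕ := sumAlt id l.tail

/-- `γ(π) = λ1 − λ2 + λ3 − λ4 + ⋯ = O(π) − E(π)`, the alternating sum of the parts.
For a weakly decreasing list we have `Osum l ≥ Esum l`, so natural subtraction is exact. -/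
def gammaSum (l : List ℕ) : ℕ := Osum l - Esum l

/-- `⌈O⌉(π) = ∑ ⌈λ_{2i−1}/2⌉`. -/
def ceilO (l : List ℕ) : ℕ := sumAlt (fun a => (a + 1) / 2) l

/-- `⌊O⌋(π) = ∑ ⌊λ_{2i−1}/2⌋`. -/
def floorO (l : List ℕ) : ℕ := sumAlt (fun a => a / 2) l

/-- `⌈E⌉(π) = ∑ ⌈λ_{2i}/2⌉`. -/
def ceilE (l : List ℕ) : ℕ := sumAlt (fun a => (a + 1) / 2) l.tail

/-- `⌊E⌋(π) = ∑ ⌊λ_{2i}/2⌋`. -/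
def floorE (l : List ℕ) : ℕ := sumAlt (fun a => a / 2) l.tail

/-- A partition: a weakly decreasing finite list of positive integers. -/
def IsPartition (l : List ℕ) : Prop := l.Pairwise (· ≥ ·) ∧ ∀ x ∈ l, 0 < x

/-- A partition into distinct parts: a strictly decreasing finite list of positive integers. -/
def IsDistinctPartition (l : List ℕ) : Prop := l.Pairwise (· > ·) ∧ ∀ x ∈ l, 0 < x

/-- The Gaussian binomial coefficient `[n choose k]_q` as a polynomial in `q`
(defined by the q-Pascal recurrence; it equals `(q;q)_n / ((q;q)_k (q;q)_{n−k})`). -/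
noncomputable def qbinom : ℕ → ℕ → Polynomial ℤ
  | _, 0 => 1
  | 0, _ + 1 => 0
  | n + 1, k + 1 => qbinom n k + Polynomial.X ^ (k + 1) * qbinom n (k + 1)

section Aux

open Polynomial

lemma Esum_cons (a : ℕ) (t : List ℕ) : Esum (a :: t) = Osum t := rfl

lemma Osum_cons (a : ℕ) (t : List ℕ) : Osum (a :: t) = a + Esum t := by
  cases t <;> simp [Osum, Esum, sumAlt]

lemma key_bounds (l : List ℕ) (h1 : l.Pairwise (· > ·)) (h2 : ∀ x ∈ l, 0 < x) :
    Esum l ≤ Osum l ∧ ∀ M, (∀ x ∈ l, x ≤ M) → Osum l ≤ Esum l + M := by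
  induction l with
  | nil => simp [Osum, Esum, sumAlt]
  | cons a t ih =>
    obtain ⟨hat, hts⟩ := List.pairwise_cons.mp h1
    have htp : ∀ x ∈ t, 0 < x := fun x hx => h2 x (List.mem_cons_of_mem _ hx)
    obtain ⟨ih1, ih2⟩ := ih hts htp
    have ha : 0 < a := h2 a (List.mem_cons_self)
    have hb : Osum t ≤ Esum t + (a - 1) := ih2 (a - 1) (fun x hx => by have := hat x hx; omega)
    refine ⟨?_, ?_⟩
    · rw [Esum_cons, Osum_cons]; omega
    · intro M hM
      have haM : a ≤ M := hM a (List.mem_cons_self)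
      rw [Esum_cons, Osum_cons]; omega

lemma Esum_lt_Osum (a : ℕ) (t : List ℕ) (h1 : (a :: t).Pairwise (· > ·))
    (h2 : ∀ x ∈ a :: t, 0 < x) : Esum (a :: t) < Osum (a :: t) := by
  obtain ⟨hat, hts⟩ := List.pairwise_cons.mp h1
  have htp : ∀ x ∈ t, 0 < x := fun x hx => h2 x (List.mem_cons_of_mem _ hx)
  have ha : 0 < a := h2 a (List.mem_cons_self)
  have hb : Osum t ≤ Esum t + (a - 1) :=
    (key_bounds t hts htp).2 (a - 1) (fun x hx => by have := hat x hx; omega)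
  rw [Esum_cons, Osum_cons]; omega

/-- The set of strictly decreasing lists of positive integers bounded by `N`. -/
lemma finite_B : ∀ N : ℕ, {l : List ℕ | l.Pairwise (· > ·) ∧ ∀ x ∈ l, 0 < x ∧ x ≤ N}.Finite := by
  intro N
  induction N with
  | zero =>
    apply Set.Finite.subset (Set.finite_singleton ([] : List ℕ))
    rintro l ⟨hs, hx⟩
    cases l with
    | nil => rfl
    | cons a t => have := hx a (List.mem_cons_self); omega
  | succ N ih =>
    apply Set.Finite.subset (ih.union (ih.image (List.cons (N + 1))))
    rintro l ⟨hs, hx⟩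
    by_cases h : ∀ x ∈ l, x ≤ N
    · left; exact ⟨hs, fun x hxl => ⟨(hx x hxl).1, h x hxl⟩⟩
    · right
      push_neg at h
      obtain ⟨y, hy, hyN⟩ := h
      cases l with
      | nil => simp at hy
      | cons a t =>
        obtain ⟨hat, hts⟩ := List.pairwise_cons.mp hs
        have ha : a = N + 1 := by
          rcases List.mem_cons.mp hy with h | h
          · have := (hx a (List.mem_cons_self)).2; omega
          · have := hat y h; have := (hx a (List.mem_cons_self)).2; omega
        exact ⟨t, ⟨hts, fun x hxt =>
          ⟨(hx x (List.mem_cons_of_mem _ hxt)).1, by have := hat x hxt; omega⟩⟩, by rw [ha]⟩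

def Aset (N j : ℕ) : Set (List ℕ) :=
  {l : List ℕ | IsDistinctPartition l ∧ (∀ x ∈ l, x ≤ N) ∧ gammaSum l = j}

lemma finite_A (N j : ℕ) : (Aset N j).Finite :=
  (finite_B N).subset (fun l hl => ⟨hl.1.1, fun x hx => ⟨hl.1.2 x hx, hl.2.1 x hx⟩⟩)

lemma qbinom_zero_right (n : ℕ) : qbinom n 0 = 1 := by cases n <;> simp [qbinom]

lemma qbinom_succ_succ (n k : ℕ) :
    qbinom (n + 1) (k + 1) = qbinom n k + Polynomial.X ^ (k + 1) * qbinom n (k + 1) := by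
  simp [qbinom]

lemma qbinom_eq_zero : ∀ {n k : ℕ}, n < k → qbinom n k = 0 := by
  intro n
  induction n with
  | zero =>
    intro k hk
    cases k with
    | zero => omega
    | succ k => simp [qbinom]
  | succ n ih =>
    intro k hk
    cases k with
    | zero => omega
    | succ k => rw [qbinom_succ_succ, ih (by omega), ih (by omega), mul_zero, add_zero]

lemma qbinom_self : ∀ n : ℕ, qbinom n n = 1 := by
  intro n
  induction n with
  | zero => simp [qbinom]
  | succ n ih => rw [qbinom_succ_succ, ih, qbinom_eq_zero (by omega), mul_zero, add_zero]

lemma qbinom_dual : ∀ n k : ℕ, k ≤ n →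
    qbinom (n + 1) (k + 1) = qbinom n (k + 1) + Polynomial.X ^ (n - k) * qbinom n k := by
  intro n
  induction n with
  | zero =>
    intro k hk
    interval_cases k
    simp [qbinom]
  | succ n ih =>
    intro k hk
    by_cases hk1 : k = n + 1
    · subst hk1
      rw [qbinom_self, qbinom_eq_zero (by omega), Nat.sub_self, pow_zero, one_mul,
        qbinom_self, zero_add]
    · have hkn : k ≤ n := by omega
      cases k with
      | zero =>
        have h1 := qbinom_succ_succ (n + 1) 0
        have h3 := ih 0 (Nat.zero_le n)
        have h4 := qbinom_succ_succ n 0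
        have hz1 := qbinom_zero_right (n + 1)
        have hz2 := qbinom_zero_right n
        rw [Nat.sub_zero] at h3
        rw [Nat.sub_zero]
        linear_combination h1 + Polynomial.X * h3 - h4 + hz1 +
          (Polynomial.X ^ (n + 1) - 1) * hz2 - Polynomial.X ^ (n + 1) * hz1
      | succ k' =>
        have hk'n : k' + 1 ≤ n := hkn
        obtain ⟨m, hm⟩ : ∃ m, n = k' + 1 + m := ⟨n - (k' + 1), by omega⟩
        subst hm
        have h1 := qbinom_succ_succ (k' + 1 + m + 1) (k' + 1)
        have h2 := ih (k' + 1) hk'n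
        have h3 := ih k' (by omega)
        have h4 := qbinom_succ_succ (k' + 1 + m) (k' + 1)
        have h5 := qbinom_succ_succ (k' + 1 + m) k'
        rw [show k' + 1 + m - (k' + 1) = m from by omega] at h2
        rw [show k' + 1 + m - k' = m + 1 from by omega] at h3
        rw [show k' + 1 + m + 1 - (k' + 1) = m + 1 from by omega]
        linear_combination h1 + Polynomial.X ^ (k' + 2) * h2 - Polynomial.X ^ (m + 1) * h5 - h4 + h3

lemma qbinom_symm : ∀ n k : ℕ, k ≤ n → qbinom n (n - k) = qbinom n k := by
  intro n
  induction n with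
  | zero => intro k hk; interval_cases k; rfl
  | succ n ih =>
    intro k hk
    cases k with
    | zero => rw [Nat.sub_zero, qbinom_self, qbinom_zero_right]
    | succ k' =>
      by_cases h : k' + 1 = n + 1
      · rw [h, Nat.sub_self, qbinom_zero_right, qbinom_self]
      · have hk'n : k' + 1 ≤ n := by omega
        rw [show n + 1 - (k' + 1) = (n - (k' + 1)) + 1 from by omega,
          qbinom_succ_succ n (n - (k' + 1)), show n - (k' + 1) + 1 = n - k' from by omega,
          ih (k' + 1) hk'n, ih k' (by omega)]
        have hd := qbinom_dual n k' (by omega)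
        linear_combination -hd

lemma qbinom_dual' (n k : ℕ) (hk : k ≤ n) :
    qbinom (n + 1) (k + 1) = qbinom n (k + 1) + Polynomial.X ^ (n - k) * qbinom n (n - k) := by
  rw [qbinom_symm n k hk]; exact qbinom_dual n k hk

lemma Aset_gamma_zero (N : ℕ) : Aset N 0 = {[]} := by
  ext l
  simp only [Aset, Set.mem_setOf_eq, Set.mem_singleton_iff]
  constructor
  · rintro ⟨⟨hs, hp⟩, hle, hg⟩
    cases l with
    | nil => rfl
    | cons a t =>
      have h := Esum_lt_Osum a t hs hp
      unfold gammaSum at hg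
      omega
  · rintro rfl
    exact ⟨⟨List.Pairwise.nil, by simp⟩, by simp, rfl⟩

lemma Aset_empty (N j : ℕ) (h : N < j) : Aset N j = ∅ := by
  ext l
  simp only [Aset, Set.mem_setOf_eq, Set.mem_empty_iff_false, iff_false]
  rintro ⟨⟨hs, hp⟩, hle, hg⟩
  have h1 := (key_bounds l hs hp).1
  have h2 := (key_bounds l hs hp).2 N hle
  unfold gammaSum at hg
  omega

lemma Aset_decomp (N j : ℕ) (hj : j ≤ N) :
    Aset (N + 1) (j + 1) = Aset N (j + 1) ∪ List.cons (N + 1) '' Aset N (N - j) := by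
  ext l
  simp only [Aset, Set.mem_setOf_eq, Set.mem_union, Set.mem_image]
  constructor
  · rintro ⟨⟨hs, hp⟩, hle, hg⟩
    by_cases hN : ∀ x ∈ l, x ≤ N
    · left; exact ⟨⟨hs, hp⟩, hN, hg⟩
    · right
      push_neg at hN
      obtain ⟨y, hy, hyN⟩ := hN
      cases l with
      | nil => simp at hy
      | cons a t =>
        obtain ⟨hat, hts⟩ := List.pairwise_cons.mp hs
        have ha : a = N + 1 := by
          rcases List.mem_cons.mp hy with h | h
          · have := hle a (List.mem_cons_self); omega
          · have := hat y h; have := hle a (List.mem_cons_self); omega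
        subst ha
        have htle : ∀ x ∈ t, x ≤ N := fun x hx => by have := hat x hx; omega
        have htp : ∀ x ∈ t, 0 < x := fun x hx => hp x (List.mem_cons_of_mem _ hx)
        refine ⟨t, ⟨⟨hts, htp⟩, htle, ?_⟩, rfl⟩
        have h1 := (key_bounds t hts htp).1
        have h2 := (key_bounds t hts htp).2 N htle
        unfold gammaSum at hg ⊢
        rw [Esum_cons, Osum_cons] at hg
        omega
  · rintro (⟨⟨hs, hp⟩, hle, hg⟩ | ⟨t, ⟨⟨hs, hp⟩, hle, hg⟩, rfl⟩)
    · exact ⟨⟨hs, hp⟩, fun x hx => le_trans (hle x hx) (by omega), hg⟩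
    · have h1 := (key_bounds t hs hp).1
      have h2 := (key_bounds t hs hp).2 N hle
      refine ⟨⟨List.pairwise_cons.mpr ⟨fun y hy => by have := hle y hy; omega, hs⟩,
        fun y hy => ?_⟩, fun y hy => ?_, ?_⟩
      · rcases List.mem_cons.mp hy with h | h
        · omega
        · exact hp y h
      · rcases List.mem_cons.mp hy with h | h
        · omega
        · exact le_trans (hle y h) (by omega)
      · unfold gammaSum at hg ⊢
        rw [Esum_cons, Osum_cons]
        omega

lemma main_sum : ∀ N j : ℕ,
    ∑ᶠ l ∈ Aset N j, (Polynomial.X : Polynomial ℤ) ^ Esum l = qbinom N j := by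
  intro N
  induction N with
  | zero =>
    intro j
    cases j with
    | zero =>
      rw [Aset_gamma_zero, finsum_mem_singleton, qbinom_zero_right,
        show Esum [] = 0 from rfl, pow_zero]
    | succ j =>
      rw [Aset_empty 0 (j + 1) (by omega), finsum_mem_empty, qbinom_eq_zero (by omega)]
  | succ N ih =>
    intro j
    cases j with
    | zero =>
      rw [Aset_gamma_zero, finsum_mem_singleton, qbinom_zero_right,
        show Esum [] = 0 from rfl, pow_zero]
    | succ j =>
      by_cases hj : j ≤ N
      · rw [Aset_decomp N j hj]
        have hfin1 := finite_A N (j + 1)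
        have hfin2 := (finite_A N (N - j)).image (List.cons (N + 1))
        have hdisj : Disjoint (Aset N (j + 1)) (List.cons (N + 1) '' Aset N (N - j)) := by
          rw [Set.disjoint_left]
          rintro l ⟨_, hle, _⟩ ⟨t, _, rfl⟩
          have := hle (N + 1) (List.mem_cons_self)
          omega
        rw [finsum_mem_union hdisj hfin1 hfin2, ih (j + 1),
          finsum_mem_image ((List.cons_injective).injOn)]
        have hcongr : ∑ᶠ t ∈ Aset N (N - j), (Polynomial.X : Polynomial ℤ) ^ Esum ((N + 1) :: t)
            = ∑ᶠ t ∈ Aset N (N - j),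
                Polynomial.X ^ (N - j) * (Polynomial.X : Polynomial ℤ) ^ Esum t := by
          apply finsum_mem_congr rfl
          rintro t ⟨⟨hs, hp⟩, hle, hg⟩
          have h1 := (key_bounds t hs hp).1
          have hO : Osum t = Esum t + (N - j) := by unfold gammaSum at hg; omega
          rw [Esum_cons, hO, add_comm, pow_add]
        rw [hcongr]
        have hfin := finite_A N (N - j)
        rw [← Set.Finite.coe_toFinset hfin, finsum_mem_coe_finset, ← Finset.mul_sum,
          ← finsum_mem_coe_finset, Set.Finite.coe_toFinset hfin, ih (N - j)]
        exact (qbinom_dual' N j hj).symm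
      · rw [Aset_empty (N + 1) (j + 1) (by omega), finsum_mem_empty,
          qbinom_eq_zero (by omega)]

end Aux

/-- In `ℤ[q]`: `∑_{π ∈ D_{≤N}, γ(π) = j} q^{E(π)} = [N choose j]_q`. -/
theorem distinct_even_gaussian (N j : ℕ) (hj : j ≤ N) :
    ∑ᶠ l ∈ {l : List ℕ | IsDistinctPartition l ∧ (∀ x ∈ l, x ≤ N) ∧ gammaSum l = j},
      (Polynomial.X : Polynomial ℤ) ^ Esum l
    = qbinom N j := by
  exact main_sum N j
end

section
/- For every nonnegative integer n, the number of partitions π into distinct parts with O(π) = n equals the weighted count ∑_μ ω(μ), taken over all partitions μ of n whose consecutive parts differ by at least 2 (Rogers–Ramanujan partitions), where for μ = (μ1, …, μk) with k ≥ 1 the weight is ω(μ) := μ_k · ∏_{i=1}^{k−1} (μ_i − μ_{i+1} − 1), and ω(∅) := 1. -/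
/-- A Rogers–Ramanujan partition: consecutive parts differ by at least 2
(and all parts are positive). -/
def IsRRPartition (l : List ℕ) : Prop :=
  l.Chain' (fun a b => b + 2 ≤ a) ∧ ∀ x ∈ l, 0 < x

/-- The multiplicative weight `ω(μ) = μ_k ∏_{i=1}^{k−1} (μ_i − μ_{i+1} − 1)`,
with `ω(∅) = 1`. -/
def rrWeight : List ℕ → ℕ
  | [] => 1
  | [a] => a
  | a :: b :: l => (a - b - 1) * rrWeight (b :: l)

/-- the odd-indexed parts λ1, λ3, … -/
def oddParts : List ℕ → List ℕ
  | [] => []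
  | [a] => [a]
  | a :: _ :: l => a :: oddParts l

lemma sum_oddParts (l : List ℕ) : (oddParts l).sum = Osum l := by
  induction l using oddParts.induct with
  | case1 => rfl
  | case2 a => rfl
  | case3 a b l ih => simp [oddParts, Osum, sumAlt] at *; omega

lemma oddParts_head {a : ℕ} {l : List ℕ} : ∃ t, oddParts (a :: l) = a :: t := by
  cases l with
  | nil => exact ⟨[], rfl⟩
  | cons b m => exact ⟨oddParts m, rfl⟩

lemma exists_cons_of_oddParts {r : List ℕ} {b : ℕ} {m : List ℕ}
    (h : oddParts r = b :: m) : ∃ t, r = b :: t := by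
  cases r with
  | nil => simp [oddParts] at h
  | cons x u =>
    obtain ⟨w, hw⟩ := oddParts_head (a := x) (l := u)
    rw [hw] at h
    exact ⟨u, by simp at h; simp [h.1]⟩

lemma sorted_gt_iff_chain' (l : List ℕ) :
    l.Pairwise (· > ·) ↔ l.Chain' (· > ·) :=
  (List.isChain_iff_pairwise).symm

lemma oddParts_RR {l : List ℕ} (h : IsDistinctPartition l) : IsRRPartition (oddParts l) := by
  obtain ⟨hs, hp⟩ := h
  rw [sorted_gt_iff_chain'] at hs
  induction l using oddParts.induct with
  | case1 => exact ⟨List.isChain_nil, by simp [oddParts]⟩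
  | case2 a => exact ⟨List.isChain_singleton a, by simpa [oddParts] using hp⟩
  | case3 a b l ih =>
    have hab : a > b := (List.isChain_cons_cons.1 hs).1
    have hbl : (b :: l).Chain' (· > ·) := (List.isChain_cons_cons.1 hs).2
    have hl : l.Chain' (· > ·) := hbl.tail
    obtain ⟨hc, hq⟩ := ih hl (fun x hx => hp x (by simp [hx]))
    constructor
    · show (a :: oddParts l).Chain' _
      rw [List.Chain', List.isChain_cons]
      refine ⟨?_, hc⟩
      intro y hy
      cases l with
      | nil => simp [oddParts] at hy
      | cons c m =>
        obtain ⟨t, ht⟩ := oddParts_head (a := c) (l := m)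
        rw [ht] at hy
        simp at hy
        have : b > c := (List.isChain_cons_cons.1 hbl).1
        omega
    · intro x hx
      simp only [oddParts, List.mem_cons] at hx
      rcases hx with rfl | hx
      · exact hp x (by simp)
      · exact hq x hx

/-- Lists of length ≤ m with all entries ≤ B. -/
def listsLE (B : ℕ) : ℕ → Finset (List ℕ)
  | 0 => {[]}
  | m + 1 => insert [] ((Finset.range (B + 1) ×ˢ listsLE B m).image fun p => p.1 :: p.2)

lemma mem_listsLE {B m : ℕ} {l : List ℕ} :
    l ∈ listsLE B m ↔ l.length ≤ m ∧ ∀ x ∈ l, x ≤ B := by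
  induction m generalizing l with
  | zero => simp [listsLE]; rintro rfl; simp
  | succ m ih =>
    simp only [listsLE, Finset.mem_insert, Finset.mem_image, Finset.mem_product,
      Finset.mem_range, Prod.exists]
    constructor
    · rintro (rfl | ⟨a, t, ⟨ha, ht⟩, rfl⟩)
      · simp
      · obtain ⟨h1, h2⟩ := ih.1 ht
        refine ⟨by simpa using Nat.succ_le_succ h1, ?_⟩
        intro x hx; rcases List.mem_cons.1 hx with rfl | hx
        · omega
        · exact h2 x hx
    · rintro ⟨h1, h2⟩
      cases l with
      | nil => exact Or.inl rfl
      | cons a t =>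
        refine Or.inr ⟨a, t, ⟨?_, ih.2 ⟨by simpa using h1, fun x hx => h2 x (by simp [hx])⟩⟩, rfl⟩
        have := h2 a (by simp); omega

/-- The set of distinct partitions with given odd-part list μ. -/
def fiberFinset : List ℕ → Finset (List ℕ)
  | [] => {[]}
  | [a] => insert [a] ((Finset.Ioo 0 a).image fun c => [a, c])
  | a :: b :: l => ((Finset.Ioo b a) ×ˢ fiberFinset (b :: l)).image fun p => a :: p.1 :: p.2

lemma card_fiberFinset {μ : List ℕ} (hpos : ∀ x ∈ μ, 0 < x) :
    (fiberFinset μ).card = rrWeight μ := by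
  induction μ using rrWeight.induct with
  | case1 => rfl
  | case2 a =>
    have ha : 0 < a := hpos a (by simp)
    rw [fiberFinset, Finset.card_insert_of_notMem, Finset.card_image_of_injective]
    · simp [Nat.card_Ioo, rrWeight]; omega
    · intro x y h; simpa using h
    · simp only [Finset.mem_image]
      rintro ⟨c, -, h⟩
      exact absurd h (by simp)
  | case3 a b l ih =>
    rw [fiberFinset, Finset.card_image_of_injective, Finset.card_product, Nat.card_Ioo,
      ih (fun x hx => hpos x (by simp [List.mem_cons] at hx ⊢; tauto))]
    · simp [rrWeight]
    · rintro ⟨x1, x2⟩ ⟨y1, y2⟩ h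
      simp at h
      simp [h]

lemma mem_fiberFinset {μ : List ℕ} (hRR : IsRRPartition μ) {l : List ℕ} :
    l ∈ fiberFinset μ ↔ IsDistinctPartition l ∧ oddParts l = μ := by
  obtain ⟨hc, hp⟩ := hRR
  induction μ using rrWeight.induct generalizing l with
  | case1 =>
    simp only [fiberFinset, Finset.mem_singleton]
    constructor
    · rintro rfl; exact ⟨⟨List.Pairwise.nil, by simp⟩, rfl⟩
    · rintro ⟨_, h⟩
      cases l using oddParts.induct with
      | case1 => rfl
      | case2 a => simp [oddParts] at h
      | case3 a b t => simp [oddParts] at h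
  | case2 a =>
    have ha : 0 < a := hp a (by simp)
    simp only [fiberFinset, Finset.mem_insert, Finset.mem_image, Finset.mem_Ioo]
    constructor
    · rintro (rfl | ⟨c, ⟨h1, h2⟩, rfl⟩)
      · exact ⟨⟨List.pairwise_singleton _ a, by simpa⟩, rfl⟩
      · refine ⟨⟨?_, ?_⟩, rfl⟩
        · rw [sorted_gt_iff_chain']; simpa [List.Chain'] using h2
        · intro x hx; simp at hx; omega
    · rintro ⟨⟨hs, hq⟩, h⟩
      rcases l with _ | ⟨x, _ | ⟨c, r⟩⟩
      · simp [oddParts] at h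
      · simp only [oddParts, List.cons.injEq] at h
        exact Or.inl (by simp [h.1])
      · simp only [oddParts, List.cons.injEq] at h
        obtain ⟨rfl, h2⟩ := h
        have hr : r = [] := by
          cases r with
          | nil => rfl
          | cons d u =>
            obtain ⟨w, hw⟩ := oddParts_head (a := d) (l := u)
            rw [hw] at h2; simp at h2
        subst hr
        rw [sorted_gt_iff_chain', List.Chain', List.isChain_cons_cons] at hs
        exact Or.inr ⟨c, ⟨hq c (by simp), hs.1⟩, rfl⟩
  | case3 a b m ih =>
    have hab : b + 2 ≤ a := (List.isChain_cons_cons.1 hc).1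
    have hc' : (b :: m).Chain' _ := (List.isChain_cons_cons.1 hc).2
    have hp' : ∀ x ∈ b :: m, 0 < x := fun x hx => hp x (by simp [List.mem_cons] at hx ⊢; tauto)
    have hb : 0 < b := hp' b (by simp)
    simp only [fiberFinset, Finset.mem_image, Finset.mem_product, Finset.mem_Ioo, Prod.exists]
    constructor
    · rintro ⟨c, r, ⟨⟨hbc, hca⟩, hr⟩, rfl⟩
      obtain ⟨⟨hs, hq⟩, ho⟩ := (ih hc' hp').1 hr
      obtain ⟨t, rfl⟩ := exists_cons_of_oddParts ho
      rw [sorted_gt_iff_chain'] at hs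
      refine ⟨⟨?_, ?_⟩, by simp [oddParts, ho]⟩
      · rw [sorted_gt_iff_chain']
        exact List.isChain_cons_cons.2 ⟨hca, List.isChain_cons_cons.2 ⟨hbc, hs⟩⟩
      · intro x hx
        simp only [List.mem_cons] at hx
        rcases hx with rfl | rfl | hx
        · omega
        · omega
        · exact hq x (by simp [hx])
    · rintro ⟨⟨hs, hq⟩, ho⟩
      rcases l with _ | ⟨x, _ | ⟨c, r⟩⟩
      · simp [oddParts] at ho
      · simp [oddParts] at ho
      · simp only [oddParts, List.cons.injEq] at ho
        obtain ⟨rfl, hor⟩ := ho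
        obtain ⟨t, rfl⟩ := exists_cons_of_oddParts hor
        rw [sorted_gt_iff_chain', List.Chain', List.isChain_cons_cons, List.isChain_cons_cons] at hs
        obtain ⟨hac, hcb, hbt⟩ := hs
        refine ⟨c, b :: t, ⟨⟨hcb, hac⟩, ?_⟩, rfl⟩
        rw [ih hc' hp']
        refine ⟨⟨?_, fun x hx => hq x (by simp at hx ⊢; tauto)⟩, hor⟩
        rw [sorted_gt_iff_chain']
        exact hbt

lemma length_le_sum {l : List ℕ} (h : ∀ x ∈ l, 0 < x) : l.length ≤ l.sum := by
  induction l with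
  | nil => simp
  | cons a t ih =>
    have ha := h a (by simp)
    have := ih (fun x hx => h x (by simp [hx]))
    simp only [List.length_cons, List.sum_cons]
    omega

open Classical in
noncomputable def RRFinset (n : ℕ) : Finset (List ℕ) :=
  (listsLE n n).filter (fun l => IsRRPartition l ∧ l.sum = n)

lemma mem_RRFinset {n : ℕ} {l : List ℕ} :
    l ∈ RRFinset n ↔ IsRRPartition l ∧ l.sum = n := by
  classical
  rw [RRFinset, Finset.mem_filter]
  constructor
  · tauto
  · rintro ⟨hRR, hsum⟩
    refine ⟨mem_listsLE.2 ⟨?_, ?_⟩, hRR, hsum⟩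
    · rw [← hsum]; exact length_le_sum hRR.2
    · intro x hx
      rw [← hsum]
      exact List.single_le_sum (fun y _ => Nat.zero_le y) x hx

/-- The number of partitions into distinct parts with `O(π) = n` equals the weighted count
`∑ ω(μ)` over Rogers–Ramanujan partitions `μ` of `n`. -/
theorem schmidt_eq_weighted_rogers_ramanujan (n : ℕ) :
    Nat.card {l : List ℕ // IsDistinctPartition l ∧ Osum l = n}
    = ∑ᶠ l ∈ {l : List ℕ | IsRRPartition l ∧ l.sum = n}, rrWeight l := by
  classical
  have hset : {l : List ℕ | IsRRPartition l ∧ l.sum = n} = ↑(RRFinset n) := by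
    ext l; simp [mem_RRFinset]
  rw [hset, finsum_mem_coe_finset]
  have hT : {l : List ℕ | IsDistinctPartition l ∧ Osum l = n}
      = ↑((RRFinset n).biUnion fiberFinset) := by
    ext l
    simp only [Set.mem_setOf_eq, Finset.coe_biUnion, Set.mem_iUnion, Finset.mem_coe,
      Finset.mem_biUnion]
    constructor
    · rintro ⟨hd, ho⟩
      refine ⟨oddParts l, mem_RRFinset.2 ⟨oddParts_RR hd, by rw [sum_oddParts, ho]⟩, ?_⟩
      exact (mem_fiberFinset (oddParts_RR hd)).2 ⟨hd, rfl⟩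
    · rintro ⟨μ, hμ, hl⟩
      obtain ⟨hRR, hsum⟩ := mem_RRFinset.1 hμ
      obtain ⟨hd, ho⟩ := (mem_fiberFinset hRR).1 hl
      exact ⟨hd, by rw [← sum_oddParts, ho, hsum]⟩
  have : Nat.card {l : List ℕ // IsDistinctPartition l ∧ Osum l = n}
      = ((RRFinset n).biUnion fiberFinset).card := by
    rw [show {l : List ℕ // IsDistinctPartition l ∧ Osum l = n}
        = ↥{l : List ℕ | IsDistinctPartition l ∧ Osum l = n} from rfl,
      Nat.card_coe_set_eq, hT, Set.ncard_coe_finset]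
  rw [this, Finset.card_biUnion]
  · exact Finset.sum_congr rfl fun μ hμ =>
      card_fiberFinset (mem_RRFinset.1 hμ).1.2
  · intro μ1 h1 μ2 h2 hne
    simp only [Finset.disjoint_left]
    intro l hl1 hl2
    obtain ⟨-, ho1⟩ := (mem_fiberFinset (mem_RRFinset.1 h1).1).1 hl1
    obtain ⟨-, ho2⟩ := (mem_fiberFinset (mem_RRFinset.1 h2).1).1 hl2
    exact hne (by rw [← ho1, ho2])
end
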